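/- arXiv:1510.08814 — 3 statements merged into one kernel-verified Lean document; each statement's English description precedes it below -/
import Mathlib

section
/- Let H be a Hilbert space, K a bounded self-adjoint operator on H with δ·P ≤ K ≤ (1−δ)·P for some 0 < δ ≤ 1/2 and an orthogonal projection P, and let f ∈ range(P) with ‖f‖² = δ. Then the operators L₀ = K − (1/2) f⊗f* and L₁ = K + (1/2) f⊗f* satisfy 0 ≤ L₀ ≤ I and 0 ≤ L₁ ≤ I. -/
open scoped InnerProductSpace
set_option maxHeartbeats 1000000 in
open ContinuousLinearMap in
theorem perturbed_kernels_are_contractions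
    {H : Type*} [NormedAddCommGroup H] [InnerProductSpace ℂ H] [CompleteSpace H]
    (K P : H →L[ℂ] H) (hK : IsSelfAdjoint K)
    (hPidem : IsIdempotentElem P) (hPsa : IsSelfAdjoint P)
    (δ : ℝ) (hδ0 : 0 < δ) (hδ : δ ≤ 1/2)
    (hlow : (K - (δ : ℂ) • P).IsPositive)
    (hup : ((((1 - δ : ℝ)) : ℂ) • P - K).IsPositive)
    (f : H) (hf : P f = f) (hfn : ‖f‖ ^ 2 = δ) :
    ((K - (1/2 : ℂ) • ((innerSL ℂ f).smulRight f)).IsPositive ∧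
      ((1 : H →L[ℂ] H) - (K - (1/2 : ℂ) • ((innerSL ℂ f).smulRight f))).IsPositive) ∧
    ((K + (1/2 : ℂ) • ((innerSL ℂ f).smulRight f)).IsPositive ∧
      ((1 : H →L[ℂ] H) - (K + (1/2 : ℂ) • ((innerSL ℂ f).smulRight f))).IsPositive) := by
  have hsymm := isSelfAdjoint_iff_isSymmetric.mp hPsa
  -- self-adjointness of ((innerSL ℂ f).smulRight f)
  have hTsa : IsSelfAdjoint ((innerSL ℂ f).smulRight f) := by
    rw [isSelfAdjoint_iff_isSymmetric]
    intro x y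
    simp only [coe_coe, smulRight_apply, innerSL_apply_apply, inner_smul_left, inner_smul_right,
      ← inner_conj_symm x f]
    ring
  have hTsymm := isSelfAdjoint_iff_isSymmetric.mp hTsa
  have hhalfsa : IsSelfAdjoint ((1/2 : ℂ) • ((innerSL ℂ f).smulRight f)) := by
    rw [isSelfAdjoint_iff_isSymmetric]
    intro x y
    have h := hTsymm x y
    simp only [ContinuousLinearMap.coe_coe, ContinuousLinearMap.coe_smul', Pi.smul_apply,
      inner_smul_left, inner_smul_right] at h ⊢
    rw [h, show ((1:ℂ)/2) = ((1/2:ℝ):ℂ) by norm_num, Complex.conj_ofReal]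
  -- value of ((innerSL ℂ f).smulRight f) in quadratic form
  have hTval : ∀ x : H, Complex.re ⟪((innerSL ℂ f).smulRight f) x, x⟫_ℂ = ‖⟪f, x⟫_ℂ‖ ^ 2 := by
    intro x
    simp only [smulRight_apply, innerSL_apply_apply, inner_smul_left, mul_comm,
      Complex.mul_conj']
    norm_cast
  -- P quadratic form
  have hPP : ∀ x : H, P (P x) = P x := fun x => congrFun (congrArg DFunLike.coe hPidem) x
  have hPre : ∀ x : H, Complex.re ⟪P x, x⟫_ℂ = ‖P x‖ ^ 2 := by
    intro x
    have h1 : ⟪P x, x⟫_ℂ = ⟪P x, P x⟫_ℂ := by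
      nth_rewrite 1 [← hPP x]
      exact hsymm (P x) x
    rw [h1, ← RCLike.re_to_complex, inner_self_eq_norm_sq]
  have hPle : ∀ x : H, ‖P x‖ ^ 2 ≤ ‖x‖ ^ 2 := by
    intro x
    have h1 : Complex.re ⟪P x, x⟫_ℂ ≤ ‖P x‖ * ‖x‖ := by
      rw [← RCLike.re_to_complex]; exact re_inner_le_norm _ _
    rw [hPre x] at h1
    nlinarith [norm_nonneg (P x), norm_nonneg x]
  -- Cauchy-Schwarz
  have hCS : ∀ x : H, ‖⟪f, x⟫_ℂ‖ ^ 2 ≤ δ * ‖P x‖ ^ 2 := by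
    intro x
    have h1 : ⟪f, x⟫_ℂ = ⟪f, P x⟫_ℂ := by
      conv_lhs => rw [← hf]
      exact hsymm f x
    have h2 : ‖⟪f, P x⟫_ℂ‖ ≤ ‖f‖ * ‖P x‖ := norm_inner_le_norm _ _
    rw [h1]
    calc ‖⟪f, P x⟫_ℂ‖ ^ 2 ≤ (‖f‖ * ‖P x‖) ^ 2 := by
          exact pow_le_pow_left₀ (norm_nonneg _) h2 2
      _ = δ * ‖P x‖ ^ 2 := by rw [mul_pow, hfn]
  -- bounds on K quadratic form
  have hlow' : ∀ x : H, δ * ‖P x‖ ^ 2 ≤ Complex.re ⟪K x, x⟫_ℂ := by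
    intro x
    have h := hlow.2 x
    simp only [reApplyInnerSelf, sub_apply, smul_apply, inner_sub_left, inner_smul_left,
      Complex.conj_ofReal, map_sub, RCLike.re_to_complex, Complex.re_ofReal_mul, hPre x] at h
    linarith
  have hup' : ∀ x : H, Complex.re ⟪K x, x⟫_ℂ ≤ (1 - δ) * ‖P x‖ ^ 2 := by
    intro x
    have h := hup.2 x
    simp only [reApplyInnerSelf, sub_apply, smul_apply, inner_sub_left, inner_smul_left,
      Complex.conj_ofReal, map_sub, RCLike.re_to_complex, Complex.re_ofReal_mul, hPre x] at h
    linarith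
  have hxsq : ∀ x : H, Complex.re ⟪x, x⟫_ℂ = ‖x‖ ^ 2 := by
    intro x; rw [← RCLike.re_to_complex, inner_self_eq_norm_sq]
  have hchalf : (1/2 : ℂ) = ((1/2 : ℝ) : ℂ) := by norm_num
  have hredhalf : ∀ x : H, Complex.re ⟪((1/2 : ℂ) • ((innerSL ℂ f).smulRight f)) x, x⟫_ℂ = (1/2) * ‖⟪f, x⟫_ℂ‖ ^ 2 := by
    intro x
    rw [smul_apply, inner_smul_left, hchalf, Complex.conj_ofReal, Complex.re_ofReal_mul, hTval x]
  have hc0 : ∀ x : H, (0:ℝ) ≤ ‖⟪f, x⟫_ℂ‖ ^ 2 := fun x => sq_nonneg _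
  have hp0 : ∀ x : H, (0:ℝ) ≤ ‖P x‖ ^ 2 := fun x => sq_nonneg _
  refine ⟨⟨⟨(hK.sub hhalfsa).isSymmetric, fun x => ?_⟩, ⟨((IsSelfAdjoint.one _).sub (hK.sub hhalfsa)).isSymmetric, fun x => ?_⟩⟩,
    ⟨⟨(hK.add hhalfsa).isSymmetric, fun x => ?_⟩, ⟨((IsSelfAdjoint.one _).sub (hK.add hhalfsa)).isSymmetric, fun x => ?_⟩⟩⟩
  · show (0:ℝ) ≤ Complex.re ⟪_, _⟫_ℂ
    rw [sub_apply, inner_sub_left, Complex.sub_re, hredhalf x]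
    nlinarith [hlow' x, hCS x, hp0 x]
  · show (0:ℝ) ≤ Complex.re ⟪_, _⟫_ℂ
    rw [sub_apply, sub_apply, ContinuousLinearMap.one_apply, inner_sub_left, inner_sub_left, Complex.sub_re,
      Complex.sub_re, hxsq x, hredhalf x]
    nlinarith [hup' x, hCS x, hp0 x, hPle x, hc0 x, hlow' x]
  · show (0:ℝ) ≤ Complex.re ⟪_, _⟫_ℂ
    rw [add_apply, inner_add_left, Complex.add_re, hredhalf x]
    nlinarith [hlow' x, hp0 x, hc0 x]
  · show (0:ℝ) ≤ Complex.re ⟪_, _⟫_ℂ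
    rw [sub_apply, add_apply, ContinuousLinearMap.one_apply, inner_sub_left, inner_add_left, Complex.sub_re,
      Complex.add_re, hxsq x, hredhalf x]
    nlinarith [hup' x, hCS x, hp0 x, hPle x, hc0 x]
end

section
/- For β > 1/2, with μ_k = N(k, k^{2β}) and ν_k = N(k+1, (k+1)^{2β}) Gaussian measures on ℝ, the product over k ≥ 1 of the Hellinger affinities ∫√(f_k g_k) dλ converges to a positive limit; here the k-th affinity equals √(1 − (k^β − (k+1)^β)²/(k^{2β} + (k+1)^{2β})) · exp(−1/(2(k^{2β} + (k+1)^{2β}))). In particular ∑_{k≥1} (1 − ∫√(f_k g_k) dλ) < ∞. -/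
open Real Filter Finset

set_option maxHeartbeats 1000000

private lemma kak_core (r t P : ℝ) (hr0 : 0 ≤ r) (hr1 : r < 1) (ht0 : 0 < t)
    (ht4 : t ≤ 1/4) (hPr : P = Real.sqrt (1 - r) * Real.exp (-t)) :
    0 < P ∧ P ≤ 1 ∧ 1 - P ≤ r + t ∧ (r ≤ 1/2 → -Real.log P ≤ 2*r + 2*t) := by
  have hPpos : 0 < P := by
    rw [hPr]
    exact mul_pos (Real.sqrt_pos.2 (by linarith)) (Real.exp_pos _)
  have hPle1 : P ≤ 1 := by
    rw [hPr]
    have h1 : Real.sqrt (1 - r) ≤ 1 := Real.sqrt_le_one.2 (by linarith)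
    have h2 : Real.exp (-t) ≤ 1 := Real.exp_le_one_iff.2 (by linarith)
    nlinarith [Real.sqrt_nonneg (1 - r), Real.exp_pos (-t)]
  have hlow : (1 - r) * (1 - t) ≤ P := by
    have h1 : 1 - r ≤ Real.sqrt (1 - r) := by
      nlinarith [mul_nonneg (Real.sqrt_nonneg (1-r))
          (sub_nonneg.2 (Real.sqrt_le_one.2 (show 1-r ≤ 1 by linarith))),
        Real.sq_sqrt (show (0:ℝ) ≤ 1-r by linarith)]
    have h2 : 1 - t ≤ Real.exp (-t) := by
      have := Real.add_one_le_exp (-t); linarith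
    rw [hPr]
    exact mul_le_mul h1 h2 (by linarith) (Real.sqrt_nonneg _)
  refine ⟨hPpos, hPle1, by nlinarith [mul_nonneg hr0 ht0.le], ?_⟩
  intro hrhalf
  have hlowpos : 0 < (1 - r) * (1 - t) := by nlinarith
  have hloglow : Real.log ((1 - r) * (1 - t)) ≤ Real.log P :=
    Real.log_le_log hlowpos hlow
  have hlogr : -Real.log (1 - r) ≤ 2 * r := by
    have h1 : Real.log (1 - r)⁻¹ ≤ (1 - r)⁻¹ - 1 :=
      Real.log_le_sub_one_of_pos (inv_pos.2 (by linarith))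
    have h2 : (1 - r)⁻¹ ≤ 1 + 2 * r := by
      rw [inv_eq_one_div, div_le_iff₀ (by linarith)]
      nlinarith
    rw [Real.log_inv] at h1
    linarith
  have hlogt : -Real.log (1 - t) ≤ 2 * t := by
    have h1 : Real.log (1 - t)⁻¹ ≤ (1 - t)⁻¹ - 1 :=
      Real.log_le_sub_one_of_pos (inv_pos.2 (by linarith))
    have h2 : (1 - t)⁻¹ ≤ 1 + 2 * t := by
      rw [inv_eq_one_div, div_le_iff₀ (by linarith)]
      nlinarith
    rw [Real.log_inv] at h1
    linarith
  have hmul : Real.log ((1 - r) * (1 - t)) = Real.log (1 - r) + Real.log (1 - t) :=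
    Real.log_mul (by linarith) (by linarith)
  rw [hmul] at hloglow
  linarith

private lemma kak_key (β : ℝ) (hβ : 1/2 < β) (x : ℝ) (hx : 1 ≤ x)
    (s P M C : ℝ) (hC : C = max β 1)
    (hs : s = x ^ (2*β) + (x+1) ^ (2*β))
    (hP : P = Real.sqrt (1 - (x^β - (x+1)^β)^2 / s) * Real.exp (-1 / (2 * s)))
    (hM : M = C^2 / (x+1)^2 + x ^ (-(2*β))) :
    0 < P ∧ P ≤ 1 ∧ 1 - P ≤ M ∧ (2 * C ≤ x + 1 → -Real.log P ≤ 2 * M) := by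
  have hβ0 : (0:ℝ) < β := by linarith
  have hC1 : (1:ℝ) ≤ C := hC ▸ le_max_right _ _
  have hCβ : β ≤ C := hC ▸ le_max_left _ _
  have hx0 : (0:ℝ) < x := by linarith
  have hx1 : (0:ℝ) < x + 1 := by linarith
  have ha : 0 < x ^ β := Real.rpow_pos_of_pos hx0 β
  have hb : 0 < (x+1) ^ β := Real.rpow_pos_of_pos hx1 β
  have hsq : ∀ y : ℝ, 0 < y → y ^ (2*β) = (y ^ β) ^ 2 := by
    intro y hy
    rw [mul_comm, Real.rpow_mul hy.le, Real.rpow_two]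
  have hsqx := hsq x hx0
  have hsqx1 := hsq (x+1) hx1
  have hs_pos : 0 < s := by rw [hs]; positivity
  have hone_x : (1:ℝ) ≤ x ^ (2*β) := Real.one_le_rpow hx (by linarith)
  have hone_x1 : (1:ℝ) ≤ (x+1) ^ (2*β) := Real.one_le_rpow (by linarith) (by linarith)
  have hs2 : (2:ℝ) ≤ s := by rw [hs]; linarith
  have hd : (x^β - (x+1)^β)^2 < s := by
    rw [hs, hsqx, hsqx1]; nlinarith [mul_pos ha hb]
  obtain ⟨r, hr⟩ : ∃ r : ℝ, r = (x^β - (x+1)^β)^2 / s := ⟨_, rfl⟩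
  obtain ⟨t, ht⟩ : ∃ t : ℝ, t = 1 / (2 * s) := ⟨_, rfl⟩
  have hr0 : 0 ≤ r := hr ▸ div_nonneg (sq_nonneg _) hs_pos.le
  have hr1 : r < 1 := hr ▸ (div_lt_one hs_pos).2 hd
  have ht0 : 0 < t := by rw [ht]; positivity
  have ht4 : t ≤ 1/4 := by
    rw [ht, div_le_div_iff₀ (by linarith) (by norm_num)]
    linarith
  -- bound on r
  have hdiffle : (x+1)^β - x^β ≤ C * (x+1)^β / (x+1) := by
    have hu0 : 0 < x / (x+1) := by positivity
    have hu1 : x / (x+1) ≤ 1 := by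
      rw [div_le_one hx1]; linarith
    have hbern : 1 - (x/(x+1)) ^ β ≤ C * (1 - x/(x+1)) := by
      rcases le_or_gt 1 β with hb1 | hb1
      · have h := one_add_mul_self_le_rpow_one_add (by linarith : (-1:ℝ) ≤ x/(x+1) - 1) hb1
        rw [show (1:ℝ) + (x/(x+1) - 1) = x/(x+1) by ring] at h
        nlinarith [mul_le_mul_of_nonneg_right hCβ (by linarith : (0:ℝ) ≤ 1 - x/(x+1))]
      · have h : (x/(x+1)) ^ (1:ℝ) ≤ (x/(x+1)) ^ β :=
          Real.rpow_le_rpow_of_exponent_ge hu0 hu1 hb1.le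
        rw [Real.rpow_one] at h
        nlinarith [mul_le_mul_of_nonneg_right hC1 (by linarith : (0:ℝ) ≤ 1 - x/(x+1))]
    have hquot : (x/(x+1)) ^ β = x^β / (x+1)^β := Real.div_rpow hx0.le hx1.le β
    rw [hquot] at hbern
    rw [show 1 - x/(x+1) = 1/(x+1) by field_simp; ring] at hbern
    have hmul := mul_le_mul_of_nonneg_left hbern hb.le
    calc (x+1)^β - x^β = (x+1)^β * (1 - x^β/(x+1)^β) := by field_simp
      _ ≤ (x+1)^β * (C * (1/(x+1))) := hmul
      _ = C * (x+1)^β / (x+1) := by ring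
  have hdiff0 : 0 ≤ (x+1)^β - x^β := by
    have : x ^ β ≤ (x+1)^β := Real.rpow_le_rpow hx0.le (by linarith) hβ0.le
    linarith
  have hrM : r ≤ C^2 / (x+1)^2 := by
    have hsqle : (x^β - (x+1)^β)^2 ≤ (C * (x+1)^β / (x+1))^2 := by
      rw [show (x^β - (x+1)^β)^2 = ((x+1)^β - x^β)^2 by ring]
      exact pow_le_pow_left₀ hdiff0 hdiffle 2
    have hsle : (x+1)^(2*β) ≤ s := by rw [hs]; linarith
    rw [hr]
    calc (x^β - (x+1)^β)^2 / s ≤ (x^β - (x+1)^β)^2 / (x+1)^(2*β) :=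
          div_le_div_of_nonneg_left (sq_nonneg _) (by positivity) hsle
      _ ≤ (C * (x+1)^β / (x+1))^2 / (x+1)^(2*β) :=
          (div_le_div_iff_of_pos_right (by positivity)).2 hsqle
      _ = C^2 / (x+1)^2 := by
          rw [hsqx1]; field_simp
  have htM : t ≤ x ^ (-(2*β)) := by
    rw [Real.rpow_neg hx0.le, ht, inv_eq_one_div]
    refine div_le_div_of_nonneg_left zero_le_one (by positivity) ?_
    rw [hs]; linarith
  have hMrt : r + t ≤ M := by rw [hM]; linarith
  have hPr : P = Real.sqrt (1 - r) * Real.exp (-t) := by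
    rw [hP, hr, ht]; congr 1; congr 1; ring
  obtain ⟨h1, h2, h3, h4⟩ := kak_core r t P hr0 hr1 ht0 ht4 hPr
  refine ⟨h1, h2, by linarith, ?_⟩
  intro h2C
  have hC0 : (0:ℝ) < C := by linarith
  have hrhalf : r ≤ 1/2 := by
    have ha1 : C^2/(x+1)^2 ≤ C^2/(2*C)^2 :=
      div_le_div_of_nonneg_left (by positivity) (by positivity) (by nlinarith)
    have ha2 : C^2/(2*C)^2 = 1/4 := by field_simp; ring
    linarith
  have := h4 hrhalf
  have hM2 : 2 * (r + t) ≤ 2 * M := by linarith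
  linarith

theorem kakutani_product_converges (β : ℝ) (hβ : 1/2 < β)
    (A : ℕ → ℝ)
    (hA : ∀ k : ℕ, 1 ≤ k → A k =
      Real.sqrt (1 - ((k:ℝ)^β - ((k:ℝ)+1)^β)^2 / ((k:ℝ)^(2*β) + ((k:ℝ)+1)^(2*β))) *
        Real.exp (-1 / (2 * ((k:ℝ)^(2*β) + ((k:ℝ)+1)^(2*β))))) :
    (∃ L : ℝ, 0 < L ∧
      Filter.Tendsto (fun n => ∏ k ∈ Finset.Icc 1 n, A k) Filter.atTop (nhds L)) ∧
    Summable (fun k : ℕ => 1 - A (k+1)) := by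
  have hβ0 : (0:ℝ) < β := by linarith
  set C : ℝ := max β 1 with hC
  have hC1 : (1:ℝ) ≤ C := le_max_right _ _
  have hC0 : (0:ℝ) < C := by linarith
  set M : ℕ → ℝ := fun k => C^2 / (((k:ℝ)+1)+1)^2 + ((k:ℝ)+1) ^ (-(2*β)) with hMdef
  have hx1 : ∀ k : ℕ, (1:ℝ) ≤ (k:ℝ)+1 := by
    intro k; have := Nat.cast_nonneg (α := ℝ) k; linarith
  have hform : ∀ k : ℕ, A (k+1) =
      Real.sqrt (1 - (((k:ℝ)+1)^β - (((k:ℝ)+1)+1)^β)^2 /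
        (((k:ℝ)+1)^(2*β) + (((k:ℝ)+1)+1)^(2*β))) *
      Real.exp (-1 / (2 * (((k:ℝ)+1)^(2*β) + (((k:ℝ)+1)+1)^(2*β)))) := by
    intro k
    have h := hA (k+1) (Nat.le_add_left 1 k)
    push_cast at h
    exact h
  have key : ∀ k : ℕ, 0 < A (k+1) ∧ A (k+1) ≤ 1 ∧ 1 - A (k+1) ≤ M k ∧
      (2 * C ≤ ((k:ℝ)+1) + 1 → -Real.log (A (k+1)) ≤ 2 * M k) :=
    fun k => kak_key β hβ ((k:ℝ)+1) (hx1 k) _ _ _ C hC rfl (hform k) rfl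
  -- summability of the majorant
  have hM1 : Summable (fun k : ℕ => C^2 / (((k:ℝ)+1)+1)^2) := by
    have base : Summable (fun n : ℕ => ((n:ℝ)^2)⁻¹) :=
      Real.summable_nat_pow_inv.2 one_lt_two
    have shifted : Summable (fun k : ℕ => (((k+2:ℕ):ℝ)^2)⁻¹) :=
      (summable_nat_add_iff 2).2 base
    have : Summable (fun k : ℕ => ((((k:ℝ)+1)+1)^2)⁻¹) := by
      refine shifted.congr fun k => ?_
      push_cast
      ring_nf
    simpa [div_eq_mul_inv] using this.mul_left (C^2)
  have hM2 : Summable (fun k : ℕ => ((k:ℝ)+1) ^ (-(2*β))) := by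
    have base : Summable (fun n : ℕ => (n:ℝ) ^ (-(2*β))) :=
      Real.summable_nat_rpow.2 (by linarith)
    have shifted : Summable (fun k : ℕ => ((k+1:ℕ):ℝ) ^ (-(2*β))) :=
      (summable_nat_add_iff 1).2 base
    refine shifted.congr fun k => ?_
    push_cast
    ring_nf
  have hMsum : Summable M := hM1.add hM2
  have hsum2 : Summable (fun k : ℕ => 1 - A (k+1)) :=
    Summable.of_nonneg_of_le (fun k => by linarith [(key k).2.1])
      (fun k => (key k).2.2.1) hMsum
  refine ⟨?_, hsum2⟩
  -- summability of -log A (k+1)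
  set N : ℕ := ⌈2*C⌉₊ with hN
  have hlog_nonneg : ∀ k : ℕ, 0 ≤ -Real.log (A (k+1)) := by
    intro k
    have := Real.log_nonpos (key k).1.le (key k).2.1
    linarith
  have hshift : Summable (fun k : ℕ => -Real.log (A ((k+N)+1))) := by
    refine Summable.of_nonneg_of_le (fun k => hlog_nonneg (k+N))
      (fun k => (key (k+N)).2.2.2 ?_) ((summable_nat_add_iff (f := fun j : ℕ => 2 * M j) N).2 (hMsum.mul_left 2))
    have h1 : (2*C : ℝ) ≤ N := Nat.le_ceil _
    have h2 : (N:ℝ) ≤ ((k+N:ℕ):ℝ) := by exact_mod_cast Nat.le_add_left N k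
    push_cast at h2 ⊢
    linarith
  have hlogsum : Summable (fun k : ℕ => Real.log (A (k+1))) := by
    have : Summable (fun k : ℕ => -Real.log (A (k+1))) :=
      (summable_nat_add_iff (f := fun k : ℕ => -Real.log (A (k+1))) N).1 hshift
    simpa using this.neg
  set ℓ : ℝ := ∑' k : ℕ, Real.log (A (k+1)) with hℓ
  have htend : Tendsto (fun n => ∑ i ∈ Finset.range n, Real.log (A (i+1)))
      atTop (nhds ℓ) := hlogsum.hasSum.tendsto_sum_nat
  refine ⟨Real.exp ℓ, Real.exp_pos ℓ, ?_⟩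
  have heq : ∀ n, ∏ k ∈ Finset.Icc 1 n, A k =
      Real.exp (∑ i ∈ Finset.range n, Real.log (A (i+1))) := by
    intro n
    rw [Real.exp_sum, ← Finset.Ico_add_one_right_eq_Icc, Finset.prod_Ico_eq_prod_range]
    refine Finset.prod_congr rfl fun i _ => ?_
    rw [Real.exp_log (key i).1, add_comm]
  rw [show (fun n => ∏ k ∈ Finset.Icc 1 n, A k) =
      fun n => Real.exp (∑ i ∈ Finset.range n, Real.log (A (i+1))) from funext heq]
  exact (Real.continuous_exp.continuousAt.tendsto).comp htend
end

section
/- Let ν be a probability measure on [0,∞) with all moments finite, c_j = (∫ x^j dν)^{-1}, μ_j = c_j/c_{j+1}, and let Γ_j (j ≥ 1) be independent with Γ_j having density c_j x^j with respect to ν. If ∑_{j≥1} (μ_{j+1}/μ_j − 1) < ∞ (each term being nonnegative), then the infinite product ∏_{j≥1} (Γ_j/μ_j) converges almost surely to a limit Z, and P(Z > 0) > 0. -/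
open MeasureTheory ProbabilityTheory Filter
open scoped NNReal ENNReal

/-- Monotonicity of independence of σ-algebras. -/
lemma aux_indep_mono {Ω : Type*} {mΩ : MeasurableSpace Ω} {μ : Measure Ω}
    {m₁ m₂ m₁' m₂' : MeasurableSpace Ω} (h : Indep m₁' m₂' μ)
    (h1 : m₁ ≤ m₁') (h2 : m₂ ≤ m₂') : Indep m₁ m₂ μ := by
  rw [Indep_iff] at h ⊢
  exact fun t1 t2 ht1 ht2 => h t1 t2 (h1 _ ht1) (h2 _ ht2)

open MeasureTheory ProbabilityTheory in
theorem infinite_product_converges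
    {Ω : Type*} [MeasurableSpace Ω] (P : Measure Ω) [IsProbabilityMeasure P]
    (ν : Measure ℝ) [IsProbabilityMeasure ν] (hpos : ∀ᵐ x ∂ν, 0 ≤ x)
    (hmom : ∀ j : ℕ, Integrable (fun x => x ^ j) ν)
    (hposmom : ∀ j : ℕ, 0 < ∫ x, x ^ j ∂ν)
    (c m : ℕ → ℝ) (hc : ∀ j, c j = (∫ x, x ^ j ∂ν)⁻¹) (hm : ∀ j, m j = c j / c (j+1))
    (Γ : ℕ → Ω → ℝ) (hmeas : ∀ j, Measurable (Γ j))
    (hindep : iIndepFun Γ P)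
    (hlaw : ∀ j, 1 ≤ j →
      Measure.map (Γ j) P = ν.withDensity (fun x => ENNReal.ofReal (c j * x ^ j)))
    (hnonneg : ∀ j : ℕ, 0 ≤ m (j+2) / m (j+1) - 1)
    (hsum : Summable (fun j : ℕ => m (j+2) / m (j+1) - 1)) :
    ∃ Z : Ω → ℝ,
      (∀ᵐ ω ∂P, Filter.Tendsto (fun n => ∏ j ∈ Finset.Icc 1 n, Γ j ω / m j)
        Filter.atTop (nhds (Z ω))) ∧
      0 < P {ω | 0 < Z ω} := by
  classical
  -- basic positivity
  have hcpos : ∀ j, 0 < c j := fun j => by rw [hc]; exact inv_pos.2 (hposmom j)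
  have hmpos : ∀ j, 0 < m j := fun j => by rw [hm]; exact div_pos (hcpos j) (hcpos (j+1))
  -- moments of Γ j
  have hGmom : ∀ j, 1 ≤ j → ∀ k : ℕ,
      Integrable (fun ω => Γ j ω ^ k) P ∧ ∫ ω, Γ j ω ^ k ∂P = c j / c (j + k) := by
    intro j hj k
    have hmap : Measure.map (Γ j) P
        = ν.withDensity fun x => (((c j * x ^ j).toNNReal : ℝ≥0) : ℝ≥0∞) := by
      rw [hlaw j hj]; rfl
    have hdmeas : Measurable fun x : ℝ => (c j * x ^ j).toNNReal :=
      (measurable_const.mul (measurable_id.pow_const j)).real_toNNReal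
    have hsmul_ae : (fun x : ℝ => ((c j * x ^ j).toNNReal : ℝ≥0) • x ^ k)
        =ᵐ[ν] fun x => c j * x ^ (j + k) := by
      filter_upwards [hpos] with x hx
      have h0 : 0 ≤ c j * x ^ j := mul_nonneg (hcpos j).le (pow_nonneg hx j)
      simp only [NNReal.smul_def, smul_eq_mul, Real.coe_toNNReal _ h0, pow_add]
      ring
    have hint2 : Integrable (fun x => x ^ k)
        (ν.withDensity fun x => (((c j * x ^ j).toNNReal : ℝ≥0) : ℝ≥0∞)) := by
      rw [integrable_withDensity_iff_integrable_smul hdmeas]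
      exact ((hmom (j+k)).const_mul (c j)).congr hsmul_ae.symm
    have hint1 : Integrable (fun x => x ^ k) (Measure.map (Γ j) P) := by
      rw [hmap]; exact hint2
    constructor
    · have := (integrable_map_measure hint1.aestronglyMeasurable
        (hmeas j).aemeasurable).mp hint1
      simpa [Function.comp_def] using this
    · have h1 : ∫ ω, Γ j ω ^ k ∂P = ∫ x, x ^ k ∂(Measure.map (Γ j) P) := by
        rw [integral_map (hmeas j).aemeasurable hint1.aestronglyMeasurable]
      rw [h1, hmap, integral_withDensity_eq_integral_smul hdmeas,
        integral_congr_ae hsmul_ae, integral_const_mul]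
      have hI : ∫ x, x ^ (j + k) ∂ν = (c (j + k))⁻¹ := by
        rw [hc]; rw [inv_inv]
      rw [hI, div_eq_mul_inv]
  -- moments of X j := Γ j / m j
  have hXint : ∀ j, 1 ≤ j → Integrable (fun ω => Γ j ω / m j) P := by
    intro j hj
    have h := (hGmom j hj 1).1
    simp only [pow_one] at h
    simpa [div_eq_mul_inv] using h.mul_const (m j)⁻¹
  have hGval : ∀ j, 1 ≤ j → ∫ ω, Γ j ω ∂P = m j := by
    intro j hj
    have h := (hGmom j hj 1).2
    simp only [pow_one] at h
    rw [h, hm]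
  have hXval : ∀ j, 1 ≤ j → ∫ ω, Γ j ω / m j ∂P = 1 := by
    intro j hj
    rw [integral_div, hGval j hj, div_self (hmpos j).ne']
  have hX2int : ∀ j, 1 ≤ j → Integrable (fun ω => (Γ j ω / m j) ^ 2) P := by
    intro j hj
    have h := (hGmom j hj 2).1
    have : (fun ω => (Γ j ω / m j) ^ 2) = fun ω => Γ j ω ^ 2 * ((m j) ^ 2)⁻¹ := by
      funext ω; rw [div_pow, div_eq_mul_inv]
    rw [this]
    exact h.mul_const _
  have hX2val : ∀ j, 1 ≤ j → ∫ ω, (Γ j ω / m j) ^ 2 ∂P = m (j+1) / m j := by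
    intro j hj
    have h := (hGmom j hj 2).2
    have heq : (fun ω => (Γ j ω / m j) ^ 2) = fun ω => Γ j ω ^ 2 * ((m j) ^ 2)⁻¹ := by
      funext ω; rw [div_pow, div_eq_mul_inv]
    rw [heq, integral_mul_const, h]
    have hcc : c j / c (j + 2) = m j * m (j+1) := by
      have h1 : c (j+1) ≠ 0 := (hcpos (j+1)).ne'
      have h2 : c (j+2) ≠ 0 := (hcpos (j+2)).ne'
      rw [hm, hm, show j + 1 + 1 = j + 2 from rfl]
      field_simp
    rw [hcc]
    field_simp [(hmpos j).ne']
  -- notation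
  set X : ℕ → Ω → ℝ := fun j ω => Γ j ω / m j with hXdef
  set M : ℕ → Ω → ℝ := fun n ω => ∏ j ∈ Finset.Icc 1 n, X j ω with hMdef
  have hMsucc : ∀ n, M (n+1) = fun ω => M n ω * X (n+1) ω := by
    intro n
    funext ω
    simp only [hMdef]
    exact Finset.prod_Icc_succ_top (Nat.succ_le_succ (Nat.zero_le n)) _
  have hM0 : M 0 = fun _ => (1:ℝ) := by
    funext ω; simp [hMdef]
  have hXmeas : ∀ j, Measurable (X j) := fun j => (hmeas j).div_const _
  have hMmeas : ∀ n, Measurable (M n) := by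
    intro n
    exact Finset.measurable_prod _ fun j _ => hXmeas j
  -- filtration
  set ℱ : MeasureTheory.Filtration ℕ ‹MeasurableSpace Ω› :=
    { seq := fun n => ⨆ j ∈ Finset.Icc 1 n, MeasurableSpace.comap (Γ j) inferInstance
      mono' := by
        intro a b hab
        refine iSup_le fun j => iSup_le fun hj => ?_
        exact le_iSup₂ (f := fun j (_ : j ∈ Finset.Icc 1 b) =>
          MeasurableSpace.comap (Γ j) inferInstance) j
          (Finset.Icc_subset_Icc_right hab hj)
      le' := fun n => iSup_le fun j => iSup_le fun _ => (hmeas j).comap_le } with hFdef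
  have hGface : ∀ j, Measurable[MeasurableSpace.comap (Γ j) inferInstance] (Γ j) :=
    fun j => Measurable.of_comap_le le_rfl
  have hXcomap : ∀ j, Measurable[MeasurableSpace.comap (Γ j) inferInstance] (X j) :=
    fun j => (hGface j).div_const _
  have hcomap_le : ∀ n j, j ∈ Finset.Icc 1 n →
      MeasurableSpace.comap (Γ j) inferInstance ≤ ℱ n := by
    intro n j hj
    exact le_iSup₂ (f := fun j (_ : j ∈ Finset.Icc 1 n) =>
      MeasurableSpace.comap (Γ j) inferInstance) j hj
  have hMfilt : ∀ n, Measurable[ℱ n] (M n) := by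
    intro n
    exact Finset.measurable_prod _ fun j hj =>
      (hXcomap j).mono (hcomap_le n j hj) le_rfl
  -- independence of ℱ n and σ(Γ (n+1))
  have hIndepF : ∀ n, Indep (ℱ n) (MeasurableSpace.comap (Γ (n+1)) inferInstance) P := by
    intro n
    have h := indep_iSup_of_disjoint (fun i => (hmeas i).comap_le) hindep
      (S := {i : ℕ | i ∈ Finset.Icc 1 n}) (T := {n+1}) (by
        rw [Set.disjoint_singleton_right]
        simp only [Set.mem_setOf_eq, Finset.mem_Icc]
        omega)
    have h2 : (⨆ i ∈ ({n+1} : Set ℕ), MeasurableSpace.comap (Γ i) inferInstance)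
        = MeasurableSpace.comap (Γ (n+1)) inferInstance := by
      simp
    rw [h2] at h
    exact h
  have hIF : ∀ n (f g : Ω → ℝ), Measurable[ℱ n] f →
      Measurable[MeasurableSpace.comap (Γ (n+1)) inferInstance] g → IndepFun f g P := by
    intro n f g hf hg
    rw [IndepFun_iff_Indep]
    exact aux_indep_mono (hIndepF n) (measurable_iff_comap_le.mp hf)
      (measurable_iff_comap_le.mp hg)
  have hmul_val : ∀ (f g : Ω → ℝ), IndepFun f g P → Integrable f P → Integrable g P →
      ∫ ω, f ω * g ω ∂P = (∫ ω, f ω ∂P) * ∫ ω, g ω ∂P := by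
    intro f g hfg hf hg
    exact IndepFun.integral_mul_eq_mul_integral hfg hf.aestronglyMeasurable hg.aestronglyMeasurable
  -- A n : second moments
  set A : ℕ → ℝ := fun n => ∏ j ∈ Finset.Icc 1 n, (m (j+1) / m j) with hAdef
  have hAsucc : ∀ n, A (n+1) = A n * (m (n+1+1) / m (n+1)) := by
    intro n
    simp only [hAdef]
    exact Finset.prod_Icc_succ_top (Nat.succ_le_succ (Nat.zero_le n)) _
  have key : ∀ n, Integrable (M n) P ∧ ∫ ω, M n ω ∂P = 1 ∧
      Integrable (fun ω => (M n ω)^2) P ∧ ∫ ω, (M n ω)^2 ∂P = A n := by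
    intro n
    induction n with
    | zero =>
      rw [hM0]
      refine ⟨integrable_const 1, by simp, ?_, by simp [hAdef]⟩
      simpa using integrable_const (1:ℝ)
    | succ n ih =>
      have hind1 : IndepFun (M n) (X (n+1)) P :=
        hIF n _ _ (hMfilt n) (hXcomap (n+1))
      have hXi := hXint (n+1) (Nat.succ_le_succ (Nat.zero_le n))
      have hX2i := hX2int (n+1) (Nat.succ_le_succ (Nat.zero_le n))
      have hint1 : Integrable (M (n+1)) P := by
        rw [hMsucc n]
        exact hind1.integrable_mul ih.1 hXi
      have hval1 : ∫ ω, M (n+1) ω ∂P = 1 := by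
        rw [hMsucc n]
        rw [hmul_val _ _ hind1 ih.1 hXi, ih.2.1,
          hXval (n+1) (Nat.succ_le_succ (Nat.zero_le n))]
        ring
      have hind2 : IndepFun (fun ω => (M n ω)^2) (fun ω => (X (n+1) ω)^2) P :=
        hIF n _ _ ((hMfilt n).pow_const 2) ((hXcomap (n+1)).pow_const 2)
      have heq2 : (fun ω => (M (n+1) ω)^2) = fun ω => (M n ω)^2 * (X (n+1) ω)^2 := by
        funext ω; rw [hMsucc n]; ring
      have hint2 : Integrable (fun ω => (M (n+1) ω)^2) P := by
        rw [heq2]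
        exact hind2.integrable_mul ih.2.2.1 hX2i
      refine ⟨hint1, hval1, hint2, ?_⟩
      rw [heq2, hmul_val _ _ hind2 ih.2.2.1 hX2i, ih.2.2.2,
        hX2val (n+1) (Nat.succ_le_succ (Nat.zero_le n)), hAsucc n]
  -- cross terms
  have hcross : ∀ n N, n ≤ N → Integrable (fun ω => M n ω * M N ω) P ∧
      ∫ ω, M n ω * M N ω ∂P = A n := by
    intro n N hnN
    induction N, hnN using Nat.le_induction with
    | base =>
      have h1 : (fun ω => M n ω * M n ω) = fun ω => (M n ω)^2 := by
        funext ω; ring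
      rw [h1]
      exact ⟨(key n).2.2.1, (key n).2.2.2⟩
    | succ N hnN ih =>
      have heq : (fun ω => M n ω * M (N+1) ω)
          = fun ω => (M n ω * M N ω) * X (N+1) ω := by
        funext ω; rw [hMsucc N]; ring
      have hfm : Measurable[ℱ N] fun ω => M n ω * M N ω :=
        ((hMfilt n).mono (ℱ.mono hnN) le_rfl).mul (hMfilt N)
      have hindc : IndepFun (fun ω => M n ω * M N ω) (X (N+1)) P :=
        hIF N _ _ hfm (hXcomap (N+1))
      have hXi := hXint (N+1) (Nat.succ_le_succ (Nat.zero_le N))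
      constructor
      · rw [heq]; exact hindc.integrable_mul ih.1 hXi
      · rw [heq, hmul_val _ _ hindc ih.1 hXi, ih.2,
          hXval (N+1) (Nat.succ_le_succ (Nat.zero_le N))]
        ring
  -- difference second moments
  have hdiffeq : ∀ n N, (fun ω => (M N ω - M n ω)^2)
      = fun ω => (M N ω)^2 - 2 * (M n ω * M N ω) + (M n ω)^2 := by
    intro n N; funext ω; ring
  have hdiffint : ∀ n N, n ≤ N → Integrable (fun ω => (M N ω - M n ω)^2) P := by
    intro n N hnN
    rw [hdiffeq n N]
    exact (((key N).2.2.1).sub ((hcross n N hnN).1.const_mul 2)).add (key n).2.2.1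
  have hdiffval : ∀ n N, n ≤ N → ∫ ω, (M N ω - M n ω)^2 ∂P = A N - A n := by
    intro n N hnN
    have h1 : Integrable (fun ω => (M N ω)^2 - 2 * (M n ω * M N ω)) P :=
      ((key N).2.2.1).sub ((hcross n N hnN).1.const_mul 2)
    have h2 : Integrable (fun ω => (M n ω)^2) P := (key n).2.2.1
    have h3 : Integrable (fun ω => 2 * (M n ω * M N ω)) P := (hcross n N hnN).1.const_mul 2
    rw [hdiffeq n N]
    rw [integral_add h1 h2, integral_sub (key N).2.2.1 h3,
      integral_const_mul, (key N).2.2.2, (hcross n N hnN).2, (key n).2.2.2]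
    ring
  -- properties of A
  have hfac : ∀ j, 1 ≤ j → 1 ≤ m (j+1) / m j := by
    intro j hj
    obtain ⟨k, rfl⟩ := Nat.exists_eq_add_of_le hj
    have h := hnonneg k
    have h2 : (1:ℕ) + k + 1 = k + 2 := by omega
    have h1 : (1:ℕ) + k = k + 1 := by omega
    rw [h2, h1]
    linarith
  have hA1 : ∀ n, 1 ≤ A n := by
    intro n
    have h0 : (1:ℝ) = ∏ _j ∈ Finset.Icc 1 n, (1:ℝ) := by simp
    rw [hAdef]
    calc (1:ℝ) = ∏ _j ∈ Finset.Icc 1 n, (1:ℝ) := h0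
    _ ≤ ∏ j ∈ Finset.Icc 1 n, (m (j+1) / m j) :=
        Finset.prod_le_prod (fun j _ => zero_le_one)
          (fun j hj => hfac j (Finset.mem_Icc.1 hj).1)
  have hAmono : Monotone A := by
    apply monotone_nat_of_le_succ
    intro n
    rw [hAsucc n]
    nlinarith [hA1 n, hfac (n+1) (Nat.succ_le_succ (Nat.zero_le n))]
  set S : ℝ := ∑' j : ℕ, (m (j+2) / m (j+1) - 1) with hSdef
  have hAbdd : ∀ n, A n ≤ Real.exp S := by
    intro n
    have h1 : A n ≤ ∏ j ∈ Finset.Icc 1 n, Real.exp (m (j+1) / m j - 1) := by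
      refine Finset.prod_le_prod (fun j hj => ?_) (fun j hj => ?_)
      · exact le_trans zero_le_one (hfac j (Finset.mem_Icc.1 hj).1)
      · have := Real.add_one_le_exp (m (j+1) / m j - 1)
        linarith
    have h2 : ∏ j ∈ Finset.Icc 1 n, Real.exp (m (j+1) / m j - 1)
        = Real.exp (∑ j ∈ Finset.Icc 1 n, (m (j+1) / m j - 1)) := by
      rw [Real.exp_sum]
    have h3 : ∑ j ∈ Finset.Icc 1 n, (m (j+1) / m j - 1)
        = ∑ k ∈ Finset.range n, (m (k+2) / m (k+1) - 1) := by
      rw [← Finset.Ico_add_one_right_eq_Icc, Finset.sum_Ico_eq_sum_range]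
      refine Finset.sum_congr (by simp) fun k _ => ?_
      have h2 : (1:ℕ) + k + 1 = k + 2 := by omega
      have h1 : (1:ℕ) + k = k + 1 := by omega
      rw [h2, h1]
    have h4 : ∑ k ∈ Finset.range n, (m (k+2) / m (k+1) - 1) ≤ S :=
      Summable.sum_le_tsum _ (fun k _ => hnonneg k) hsum
    calc A n ≤ Real.exp (∑ j ∈ Finset.Icc 1 n, (m (j+1) / m j - 1)) := by rw [← h2]; exact h1
    _ ≤ Real.exp S := Real.exp_le_exp.2 (le_trans (le_of_eq h3) h4)
  have hbddA : BddAbove (Set.range A) := by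
    refine ⟨Real.exp S, ?_⟩
    rintro x ⟨n, rfl⟩
    exact hAbdd n
  set L : ℝ := ⨆ n, A n with hLdef
  have hLtend : Tendsto A atTop (nhds L) := tendsto_atTop_ciSup hAmono hbddA
  have hAleL : ∀ n, A n ≤ L := fun n => le_ciSup hbddA n
  -- martingale property
  have hadp : StronglyAdapted ℱ M := fun n => (hMfilt n).stronglyMeasurable
  have hMint : ∀ n, Integrable (M n) P := fun n => (key n).1
  have hmart : Martingale M ℱ P := by
    refine martingale_nat hadp hMint fun n => ?_
    have hXsm : StronglyMeasurable[MeasurableSpace.comap (Γ (n+1)) inferInstance]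
        (X (n+1)) := (hXcomap (n+1)).stronglyMeasurable
    have hcond1 : P[X (n+1)|ℱ n] =ᵐ[P] fun _ => ∫ ω, X (n+1) ω ∂P :=
      condExp_indep_eq ((hmeas (n+1)).comap_le) (ℱ.le n) hXsm (hIndepF n).symm
    have hXv := hXval (n+1) (Nat.succ_le_succ (Nat.zero_le n))
    have hmul : P[M (n+1)|ℱ n] =ᵐ[P] (M n) * P[X (n+1)|ℱ n] := by
      have hi' : Integrable (fun ω => M n ω * X (n+1) ω) P := by
        rw [← hMsucc n]; exact hMint (n+1)
      have h := condExp_mul_of_stronglyMeasurable_left (μ := P) (m := ℱ n)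
        (hMfilt n).stronglyMeasurable hi'
        (hXint (n+1) (Nat.succ_le_succ (Nat.zero_le n)))
      calc P[M (n+1)|ℱ n] = P[(M n) * (X (n+1))|ℱ n] := by rw [hMsucc n]; rfl
      _ =ᵐ[P] (M n) * P[X (n+1)|ℱ n] := h
    refine EventuallyEq.symm ?_
    calc P[M (n+1)|ℱ n] =ᵐ[P] (M n) * P[X (n+1)|ℱ n] := hmul
    _ =ᵐ[P] M n := by
        filter_upwards [hcond1] with ω hω
        rw [Pi.mul_apply, hω]; simp only [hXdef, hXv, mul_one]
  -- a.s. nonnegativity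
  have hGnn : ∀ᵐ ω ∂P, ∀ j : ℕ, 0 ≤ Γ (j+1) ω := by
    rw [ae_all_iff]
    intro j
    have hms : MeasurableSet {x : ℝ | x < 0} := measurableSet_Iio
    have hν0 : ν {x : ℝ | x < 0} = 0 := by
      have := hpos
      rw [ae_iff] at this
      convert this using 2
      ext x; simp [not_le]
    have hP0 : P {ω | Γ (j+1) ω < 0} = 0 := by
      have h1 : P (Γ (j+1) ⁻¹' {x : ℝ | x < 0})
          = (Measure.map (Γ (j+1)) P) {x : ℝ | x < 0} := by
        rw [Measure.map_apply (hmeas (j+1)) hms]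
      have h2 : (Measure.map (Γ (j+1)) P) {x : ℝ | x < 0} = 0 := by
        rw [hlaw (j+1) (Nat.succ_le_succ (Nat.zero_le j)), withDensity_apply _ hms,
          Measure.restrict_eq_zero.2 hν0]
        simp
      have : {ω | Γ (j+1) ω < 0} = Γ (j+1) ⁻¹' {x : ℝ | x < 0} := rfl
      rw [this, h1, h2]
    rw [ae_iff]
    convert hP0 using 2
    ext ω; simp [not_le]
  have hMnn : ∀ᵐ ω ∂P, ∀ n, 0 ≤ M n ω := by
    filter_upwards [hGnn] with ω hω
    intro n
    refine Finset.prod_nonneg fun j hj => ?_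
    have hj1 : 1 ≤ j := (Finset.mem_Icc.1 hj).1
    obtain ⟨k, rfl⟩ := Nat.exists_eq_add_of_le hj1
    rw [show (1:ℕ) + k = k + 1 from by omega]
    exact div_nonneg (hω k) (hmpos (k+1)).le
  -- L¹ bound
  have hbdd1 : ∀ n, eLpNorm (M n) 1 P ≤ (1 : ℝ≥0) := by
    intro n
    have habs : ∫ ω, ‖M n ω‖ ∂P = 1 := by
      rw [← (key n).2.1]
      refine integral_congr_ae ?_
      filter_upwards [hMnn] with ω hω
      exact Real.norm_of_nonneg (hω n)
    rw [eLpNorm_one_eq_lintegral_enorm,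
      ← ofReal_integral_norm_eq_lintegral_enorm (hMint n), habs]
    simp
  -- Z : the limit
  set Z : Ω → ℝ := ℱ.limitProcess M P with hZdef
  have htends : ∀ᵐ ω ∂P, Tendsto (fun n => M n ω) atTop (nhds (Z ω)) :=
    hmart.submartingale.ae_tendsto_limitProcess hbdd1
  have hZsm : StronglyMeasurable Z := Filtration.stronglyMeasurable_limit_process'
  -- eLpNorm bounds
  have hsub_e2 : ∀ n N, n ≤ N →
      eLpNorm (fun ω => M N ω - M n ω) 1 P ≤ ENNReal.ofReal (L - A n) ^ (1/2 : ℝ) := by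
    intro n N hnN
    have hmeas_sub : AEStronglyMeasurable (fun ω => M N ω - M n ω) P :=
      ((hMmeas N).sub (hMmeas n)).aestronglyMeasurable
    have h1 : eLpNorm (fun ω => M N ω - M n ω) 1 P
        ≤ eLpNorm (fun ω => M N ω - M n ω) 2 P :=
      eLpNorm_le_eLpNorm_of_exponent_le (by norm_num) hmeas_sub
    have h2 : eLpNorm (fun ω => M N ω - M n ω) 2 P
        = (ENNReal.ofReal (A N - A n)) ^ (1/2 : ℝ) := by
      rw [eLpNorm_eq_lintegral_rpow_enorm_toReal (by norm_num) (by norm_num)]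
      have htoReal : (2 : ℝ≥0∞).toReal = (2:ℝ) := by simp
      rw [htoReal]
      congr 1
      have hptw : ∀ ω, ‖M N ω - M n ω‖ₑ ^ (2:ℝ)
          = ENNReal.ofReal ((M N ω - M n ω)^2) := by
        intro ω
        rw [← ofReal_norm _,
          ENNReal.ofReal_rpow_of_nonneg (norm_nonneg _) (by norm_num : (0:ℝ) ≤ 2)]
        congr 1
        rw [Real.rpow_two, Real.norm_eq_abs, sq_abs]
      simp_rw [hptw]
      rw [← ofReal_integral_eq_lintegral_ofReal (hdiffint n N hnN)
        (Eventually.of_forall fun ω => sq_nonneg _), hdiffval n N hnN]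
    calc eLpNorm (fun ω => M N ω - M n ω) 1 P
        ≤ (ENNReal.ofReal (A N - A n)) ^ (1/2 : ℝ) := h1.trans (le_of_eq h2)
    _ ≤ (ENNReal.ofReal (L - A n)) ^ (1/2 : ℝ) := by
        refine ENNReal.rpow_le_rpow ?_ (by norm_num)
        exact ENNReal.ofReal_le_ofReal (by linarith [hAleL N])
  have hZ_e : ∀ n, eLpNorm (fun ω => M n ω - Z ω) 1 P
      ≤ ENNReal.ofReal (L - A n) ^ (1/2 : ℝ) := by
    intro n
    have hlim : (fun ω => (‖M n ω - Z ω‖₊ : ℝ≥0∞))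
        =ᵐ[P] fun ω => Filter.liminf (fun N => (‖M n ω - M N ω‖₊ : ℝ≥0∞)) atTop := by
      filter_upwards [htends] with ω hω
      have htt : Tendsto (fun N => (‖M n ω - M N ω‖₊ : ℝ≥0∞)) atTop
          (nhds (‖M n ω - Z ω‖₊ : ℝ≥0∞)) := by
        refine (ENNReal.tendsto_coe.2 ?_)
        exact (continuous_nnnorm.tendsto _).comp ((tendsto_const_nhds).sub hω)
      exact (htt.liminf_eq).symm
    have hle1 : eLpNorm (fun ω => M n ω - Z ω) 1 P
        ≤ Filter.liminf (fun N => eLpNorm (fun ω => M n ω - M N ω) 1 P) atTop := by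
      rw [eLpNorm_one_eq_lintegral_enorm]; simp only [enorm_eq_nnnorm]; rw [lintegral_congr_ae hlim]
      have := lintegral_liminf_le
        (f := fun N ω => (‖M n ω - M N ω‖₊ : ℝ≥0∞)) (μ := P) (u := atTop)
        (fun N => ((hMmeas n).sub (hMmeas N)).nnnorm.coe_nnreal_ennreal)
      refine this.trans (le_of_eq ?_)
      refine Filter.liminf_congr (Eventually.of_forall fun N => ?_)
      rw [eLpNorm_one_eq_lintegral_enorm]; rfl
    refine hle1.trans ?_
    refine Filter.liminf_le_of_frequently_le' ?_
    refine ((eventually_ge_atTop n).mono fun N hN => ?_).frequently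
    have h := hsub_e2 n N hN
    have hcomm : eLpNorm (fun ω => M n ω - M N ω) 1 P
        = eLpNorm (fun ω => M N ω - M n ω) 1 P := by
      have := eLpNorm_sub_comm (M n) (M N) 1 P
      exact this
    rw [hcomm]
    exact h
  -- Z is integrable with integral 1
  have hZdiff_int : ∀ n, Integrable (fun ω => M n ω - Z ω) P := by
    intro n
    refine (memLp_one_iff_integrable.mp ⟨((hMmeas n).sub hZsm.measurable).aestronglyMeasurable, ?_⟩)
    refine lt_of_le_of_lt (hZ_e n) ?_
    exact ENNReal.rpow_lt_top_of_nonneg (by norm_num) ENNReal.ofReal_ne_top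
  have hZint : Integrable Z P := by
    have h : Integrable (fun ω => M 0 ω - (M 0 ω - Z ω)) P := (hMint 0).sub (hZdiff_int 0)
    simpa using h
  have habs_bound : ∀ n, |1 - ∫ ω, Z ω ∂P| ≤ (L - A n) ^ (1/2 : ℝ) := by
    intro n
    have h1 : ∫ ω, (M n ω - Z ω) ∂P = 1 - ∫ ω, Z ω ∂P := by
      rw [integral_sub (hMint n) hZint, (key n).2.1]
    have h2 : |∫ ω, (M n ω - Z ω) ∂P| ≤ ∫ ω, ‖M n ω - Z ω‖ ∂P := by
      rw [← Real.norm_eq_abs]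
      exact norm_integral_le_integral_norm _
    have h3 : ENNReal.ofReal (∫ ω, ‖M n ω - Z ω‖ ∂P)
        ≤ ENNReal.ofReal ((L - A n) ^ (1/2 : ℝ)) := by
      rw [ofReal_integral_norm_eq_lintegral_enorm (hZdiff_int n)]
      have h4 := hZ_e n
      rw [eLpNorm_one_eq_lintegral_enorm] at h4
      refine h4.trans (le_of_eq ?_)
      rw [ENNReal.ofReal_rpow_of_nonneg (by linarith [hAleL n]) (by norm_num)]
    have h5 : (∫ ω, ‖M n ω - Z ω‖ ∂P) ≤ (L - A n) ^ (1/2 : ℝ) := by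
      have h6 : 0 ≤ (L - A n) ^ (1/2 : ℝ) :=
        Real.rpow_nonneg (by linarith [hAleL n]) _
      exact (ENNReal.ofReal_le_ofReal_iff h6).mp h3
    rw [← h1]
    exact h2.trans h5
  have htend0 : Tendsto (fun n => (L - A n) ^ (1/2 : ℝ)) atTop (nhds 0) := by
    have h1 : Tendsto (fun n => L - A n) atTop (nhds 0) := by
      have := (tendsto_const_nhds (x := L) (f := atTop)).sub hLtend
      simpa using this
    have h2 : ContinuousAt (fun x : ℝ => x ^ (1/2 : ℝ)) 0 :=
      Real.continuousAt_rpow_const 0 (1/2) (Or.inr (by norm_num))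
    have h3 := h2.tendsto.comp h1
    simpa [Function.comp_def, Real.zero_rpow (by norm_num : (1/2:ℝ) ≠ 0)] using h3
  have hZ1 : ∫ ω, Z ω ∂P = 1 := by
    have h : |1 - ∫ ω, Z ω ∂P| ≤ 0 := ge_of_tendsto' htend0 habs_bound
    have := abs_nonpos_iff.mp h
    linarith
  -- Z nonneg a.e.
  have hZnn : ∀ᵐ ω ∂P, 0 ≤ Z ω := by
    filter_upwards [htends, hMnn] with ω hω hnn
    exact ge_of_tendsto' hω hnn
  refine ⟨Z, ?_, ?_⟩
  · filter_upwards [htends] with ω hω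
    exact hω
  · by_contra hcon
    have h0 : P {ω | 0 < Z ω} = 0 := by
      simpa [pos_iff_ne_zero] using hcon
    have hZle : ∀ᵐ ω ∂P, Z ω ≤ 0 := by
      rw [ae_iff]
      convert h0 using 2
      ext ω; simp [not_le]
    have hZ0 : Z =ᵐ[P] fun _ => (0:ℝ) := by
      filter_upwards [hZnn, hZle] with ω h1 h2
      exact le_antisymm h2 h1
    have : ∫ ω, Z ω ∂P = 0 := by
      rw [integral_congr_ae hZ0]
      simp
    rw [hZ1] at this
    norm_num at this
end
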